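/- arXiv:2507.12791 — 6 statements merged into one kernel-verified Lean document; each statement's English description precedes it below -/
import Mathlib

section
/- Let μ, ν, π be probability measures with q > 1 and λ ∈ (0,1). Then the Rényi divergence satisfies the weak triangle inequality R_q(μ ‖ π) ≤ ((q-λ)/(q-1)) R_{q/λ}(μ ‖ ν) + R_{(q-λ)/(1-λ)}(ν ‖ π). -/
open MeasureTheory
open scoped Classical

/-- The `q`-Rényi divergence `R_q(μ ‖ ν) = (q-1)⁻¹ log ∫ (dμ/dν)^q dν`, with the
convention that it is `+∞` when `μ` is not absolutely continuous w.r.t. `ν`. -/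
noncomputable def renyiDiv {Ω : Type*} [MeasurableSpace Ω] (q : ℝ) (μ ν : Measure Ω) : EReal :=
  if μ ≪ ν then (((q - 1)⁻¹ : ℝ) : EReal) * ENNReal.log (∫⁻ x, μ.rnDeriv ν x ^ q ∂ν)
  else ⊤

section Aux

variable {Ω : Type*} [MeasurableSpace Ω]

/-- For a probability measure `μ ≪ ν`, `∫ (dμ/dν)^p dν ≥ 1` for `p > 1` (Jensen). -/
lemma one_le_lintegral_rnDeriv_rpow {μ ν : Measure Ω}
    [IsProbabilityMeasure μ] [IsProbabilityMeasure ν] (hμν : μ ≪ ν) {p : ℝ} (hp : 1 < p) :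
    1 ≤ ∫⁻ x, μ.rnDeriv ν x ^ p ∂ν := by
  have hp0 : 0 < p := lt_trans one_pos hp
  have hconj : p.HolderConjugate (p / (p - 1)) := Real.HolderConjugate.conjExponent hp
  have h := ENNReal.lintegral_mul_le_Lp_mul_Lq ν hconj
    (μ.measurable_rnDeriv ν).aemeasurable (aemeasurable_const : AEMeasurable (fun _ => (1 : ENNReal)) ν)
  simp only [Pi.mul_apply, mul_one, ENNReal.one_rpow, lintegral_one, measure_univ,
    ENNReal.one_rpow] at h
  rw [Measure.lintegral_rnDeriv hμν, measure_univ] at h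
  rw [← ENNReal.one_rpow (1 / p), ENNReal.rpow_le_rpow_iff (by positivity)] at h
  exact h

lemma renyiDiv_nonneg {μ ν : Measure Ω}
    [IsProbabilityMeasure μ] [IsProbabilityMeasure ν] {p : ℝ} (hp : 1 < p) :
    0 ≤ renyiDiv p μ ν := by
  rw [renyiDiv]
  split_ifs with h
  · refine mul_nonneg ?_ ?_
    · exact_mod_cast inv_nonneg.2 (by linarith : (0:ℝ) ≤ p - 1)
    · calc (0 : EReal) = ENNReal.log 1 := by simp
        _ ≤ _ := ENNReal.log_monotone (one_le_lintegral_rnDeriv_rpow h hp)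
  · exact le_top

end Aux

/-- Weak triangle inequality for the Rényi divergence:
`R_q(μ ‖ π) ≤ ((q-λ)/(q-1)) R_{q/λ}(μ ‖ ν) + R_{(q-λ)/(1-λ)}(ν ‖ π)`. -/
theorem renyi_weak_triangle {Ω : Type*} [MeasurableSpace Ω]
    (μ ν π : Measure Ω)
    [IsProbabilityMeasure μ] [IsProbabilityMeasure ν] [IsProbabilityMeasure π]
    (q lam : ℝ) (hq : 1 < q) (hlam0 : 0 < lam) (hlam1 : lam < 1) :
    renyiDiv q μ π ≤
      (((q - lam) / (q - 1) : ℝ) : EReal) * renyiDiv (q / lam) μ ν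
        + renyiDiv ((q - lam) / (1 - lam)) ν π := by
  have hq1 : (0:ℝ) < q - 1 := by linarith
  have h1lam : (0:ℝ) < 1 - lam := by linarith
  have hqlam : (0:ℝ) < q - lam := by linarith
  have hp1 : 1 < q / lam := (one_lt_div hlam0).2 (by linarith)
  have hp2 : 1 < (q - lam) / (1 - lam) := (one_lt_div h1lam).2 (by linarith)
  have hc1 : (0:ℝ) < (q - lam) / (q - 1) := by positivity
  -- first deal with the non-absolutely-continuous cases: the RHS is `⊤`
  by_cases hμν : μ ≪ ν
  swap
  · have h2 : renyiDiv (q / lam) μ ν = ⊤ := by rw [renyiDiv, if_neg hμν]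
    rw [h2, EReal.coe_mul_top_of_pos (by exact_mod_cast hc1), EReal.top_add_of_ne_bot]
    · exact le_top
    · exact ne_bot_of_gt (lt_of_lt_of_le EReal.bot_lt_zero (renyiDiv_nonneg hp2))
  by_cases hνπ : ν ≪ π
  swap
  · have h2 : renyiDiv ((q - lam) / (1 - lam)) ν π = ⊤ := by rw [renyiDiv, if_neg hνπ]
    rw [h2, EReal.add_top_of_ne_bot]
    · exact le_top
    · refine ne_bot_of_gt (lt_of_lt_of_le EReal.bot_lt_zero ?_)
      exact mul_nonneg (by exact_mod_cast hc1.le) (renyiDiv_nonneg hp1)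
  have hμπ : μ ≪ π := hμν.trans hνπ
  -- notation
  set f := μ.rnDeriv ν with hfdef
  set g := ν.rnDeriv π with hgdef
  have hf : Measurable f := μ.measurable_rnDeriv ν
  have hg : Measurable g := ν.measurable_rnDeriv π
  set A := ∫⁻ x, f x ^ (q / lam) ∂ν with hAdef
  set B := ∫⁻ x, g x ^ ((q - lam) / (1 - lam)) ∂π with hBdef
  set I := ∫⁻ x, μ.rnDeriv π x ^ q ∂π with hIdef
  -- Hölder's inequality: I ≤ A ^ lam * B ^ (1 - lam)
  have hconj : (1 / lam).HolderConjugate (1 / (1 - lam)) := by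
    rw [Real.holderConjugate_iff]
    constructor
    · exact (one_lt_div hlam0).2 hlam1
    · rw [one_div, one_div, inv_inv, inv_inv]; ring
  have hF : Measurable fun x => f x ^ q * g x ^ lam :=
    (hf.pow_const q).mul (hg.pow_const lam)
  have hG : Measurable fun x => g x ^ (q - lam) := hg.pow_const (q - lam)
  have holder := ENNReal.lintegral_mul_le_Lp_mul_Lq π hconj hF.aemeasurable hG.aemeasurable
  have hIH : I ≤ A ^ lam * B ^ (1 - lam) := by
    have e0 : ∫⁻ a, ((fun x => f x ^ q * g x ^ lam) * fun x => g x ^ (q - lam)) a ∂π = I := by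
      refine lintegral_congr_ae ?_
      filter_upwards [Measure.rnDeriv_mul_rnDeriv hμν (κ := π)] with x hx
      simp only [Pi.mul_apply, ← hx]
      rw [ENNReal.mul_rpow_of_nonneg _ _ (by linarith : (0:ℝ) ≤ q), mul_assoc,
        ← ENNReal.rpow_add_of_nonneg lam (q - lam) hlam0.le (by linarith)]
      norm_num
      rfl
    have e1 : ∫⁻ a, (f a ^ q * g a ^ lam) ^ (1 / lam) ∂π = A := by
      have : ∀ a, (f a ^ q * g a ^ lam) ^ (1 / lam) = g a * f a ^ (q / lam) := by
        intro a
        rw [ENNReal.mul_rpow_of_nonneg _ _ (by positivity : (0:ℝ) ≤ 1 / lam),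
          ← ENNReal.rpow_mul, ← ENNReal.rpow_mul, mul_one_div, mul_one_div,
          div_self hlam0.ne', ENNReal.rpow_one, mul_comm]
      simp_rw [this]
      exact lintegral_rnDeriv_mul hνπ (hf.pow_const _).aemeasurable
    have e2 : ∫⁻ a, (g a ^ (q - lam)) ^ (1 / (1 - lam)) ∂π = B := by
      simp_rw [← ENNReal.rpow_mul, mul_one_div]
      rfl
    rw [e0, e1, e2, one_div_one_div, one_div_one_div] at holder
    exact holder
  -- basic bounds
  have hA1 : 1 ≤ A := one_le_lintegral_rnDeriv_rpow hμν hp1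
  have hB1 : 1 ≤ B := one_le_lintegral_rnDeriv_rpow hνπ hp2
  have hA0 : A ≠ 0 := fun h => by simp [h] at hA1
  have hB0 : B ≠ 0 := fun h => by simp [h] at hB1
  have hlogA : (0:EReal) ≤ ENNReal.log A := by
    calc (0 : EReal) = ENNReal.log 1 := by simp
      _ ≤ _ := ENNReal.log_monotone hA1
  have hlogB : (0:EReal) ≤ ENNReal.log B := by
    calc (0 : EReal) = ENNReal.log 1 := by simp
      _ ≤ _ := ENNReal.log_monotone hB1
  -- unfold `renyiDiv`
  rw [renyiDiv, renyiDiv, renyiDiv, if_pos hμπ, if_pos hμν, if_pos hνπ]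
  rw [← hfdef, ← hgdef, ← hAdef, ← hBdef, ← hIdef]
  have hc2 : (0:ℝ) < (q / lam - 1)⁻¹ := by
    rw [inv_pos]; linarith
  have hc3 : (0:ℝ) < ((q - lam) / (1 - lam) - 1)⁻¹ := by
    rw [inv_pos]; linarith
  by_cases hAtop : A = ⊤
  · rw [hAtop, ENNReal.log_top, EReal.coe_mul_top_of_pos (by exact_mod_cast hc2),
      EReal.coe_mul_top_of_pos (by exact_mod_cast hc1), EReal.top_add_of_ne_bot]
    · exact le_top
    · exact ne_bot_of_gt (lt_of_lt_of_le EReal.bot_lt_zero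
        (mul_nonneg (by exact_mod_cast hc3.le) hlogB))
  by_cases hBtop : B = ⊤
  · rw [hBtop, ENNReal.log_top, EReal.coe_mul_top_of_pos (by exact_mod_cast hc3),
      EReal.add_top_of_ne_bot]
    · exact le_top
    · refine ne_bot_of_gt (lt_of_lt_of_le EReal.bot_lt_zero ?_)
      exact mul_nonneg (by exact_mod_cast hc1.le)
        (mul_nonneg (by exact_mod_cast hc2.le) hlogA)
  -- main case: A, B finite
  have hItop : I ≠ ⊤ := by
    refine ne_top_of_le_ne_top ?_ hIH
    exact ENNReal.mul_ne_top (ENNReal.rpow_ne_top_of_nonneg hlam0.le hAtop)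
      (ENNReal.rpow_ne_top_of_nonneg h1lam.le hBtop)
  by_cases hI0 : I = 0
  · rw [hI0, ENNReal.log_zero, EReal.coe_mul_bot_of_pos (by exact_mod_cast inv_pos.2 hq1)]
    exact bot_le
  -- everything is a finite positive real now
  have haA : (0:ℝ) < A.toReal := ENNReal.toReal_pos hA0 hAtop
  have hbB : (0:ℝ) < B.toReal := ENNReal.toReal_pos hB0 hBtop
  have hiI : (0:ℝ) < I.toReal := ENNReal.toReal_pos hI0 hItop
  have key : Real.log I.toReal ≤ lam * Real.log A.toReal + (1 - lam) * Real.log B.toReal := by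
    have h1 : I.toReal ≤ A.toReal ^ lam * B.toReal ^ (1 - lam) := by
      rw [ENNReal.toReal_rpow, ENNReal.toReal_rpow, ← ENNReal.toReal_mul]
      refine ENNReal.toReal_mono ?_ hIH
      exact ENNReal.mul_ne_top (ENNReal.rpow_ne_top_of_nonneg hlam0.le hAtop)
        (ENNReal.rpow_ne_top_of_nonneg h1lam.le hBtop)
    calc Real.log I.toReal ≤ Real.log (A.toReal ^ lam * B.toReal ^ (1 - lam)) :=
          Real.log_le_log hiI h1
      _ = lam * Real.log A.toReal + (1 - lam) * Real.log B.toReal := by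
          rw [Real.log_mul (by positivity) (by positivity), Real.log_rpow haA,
            Real.log_rpow hbB]
  rw [ENNReal.log_pos_real' haA, ENNReal.log_pos_real' hbB, ENNReal.log_pos_real' hiI]
  norm_cast
  have e1 : (q - lam) / (q - 1) * ((q / lam - 1)⁻¹ * Real.log A.toReal)
      = lam / (q - 1) * Real.log A.toReal := by
    rw [← mul_assoc]
    congr 1
    rw [show q / lam - 1 = (q - lam) / lam by field_simp, inv_div]
    field_simp
  have e2 : ((q - lam) / (1 - lam) - 1)⁻¹ = (1 - lam) / (q - 1) := by
    rw [show (q - lam) / (1 - lam) - 1 = (q - 1) / (1 - lam) by field_simp; ring, inv_div]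
  rw [e1, e2]
  calc (q - 1)⁻¹ * Real.log I.toReal
      ≤ (q - 1)⁻¹ * (lam * Real.log A.toReal + (1 - lam) * Real.log B.toReal) := by
        exact mul_le_mul_of_nonneg_left key (by positivity)
    _ = lam / (q - 1) * Real.log A.toReal + (1 - lam) / (q - 1) * Real.log B.toReal := by
        ring
end

section
/- For probability measures μ, ν, π (with μ ≪ ν ≪ π), the KL divergence satisfies KL(μ ‖ π) ≤ 2 KL(μ ‖ ν) + log(1 + χ²(ν ‖ π)), where χ²(ν ‖ π) = ∫ (dν/dπ)² dπ − 1. -/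
open MeasureTheory
open scoped Classical ENNReal

/-- The Kullback–Leibler divergence `KL(μ ‖ ν) = ∫ log (dμ/dν) dμ`, with the convention
that it is `+∞` when `μ` is not absolutely continuous w.r.t. `ν` or the log-likelihood
ratio is not integrable. -/
noncomputable def klDiv {Ω : Type*} [MeasurableSpace Ω] (μ ν : Measure Ω) : EReal :=
  if μ ≪ ν ∧ Integrable (fun x => Real.log (μ.rnDeriv ν x).toReal) μ then
    ((∫ x, Real.log (μ.rnDeriv ν x).toReal ∂μ : ℝ) : EReal)
  else ⊤

/-- KL weak triangle inequality:
`KL(μ ‖ π) ≤ 2 KL(μ ‖ ν) + log (1 + χ²(ν ‖ π))`, where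
`1 + χ²(ν ‖ π) = ∫ (dν/dπ)² dπ`. -/
theorem kl_weak_triangle {Ω : Type*} [MeasurableSpace Ω]
    (μ ν π : Measure Ω)
    [IsProbabilityMeasure μ] [IsProbabilityMeasure ν] [IsProbabilityMeasure π]
    (hμν : μ ≪ ν) (hνπ : ν ≪ π) :
    klDiv μ π ≤ (2 : EReal) * klDiv μ ν + ENNReal.log (∫⁻ x, ν.rnDeriv π x ^ 2 ∂π) := by
  classical
  have hμπ : μ ≪ π := hμν.trans hνπ
  set Z : ℝ≥0∞ := ∫⁻ x, ν.rnDeriv π x ^ 2 ∂π with hZdef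
  -- Z as an integral w.r.t. ν
  have hZeq : ∫⁻ x, ν.rnDeriv π x ∂ν = Z := by
    rw [hZdef]
    rw [← lintegral_rnDeriv_mul hνπ (Measure.measurable_rnDeriv ν π).aemeasurable]
    simp_rw [pow_two]
  -- Z ≠ 0
  have hZ0 : Z ≠ 0 := by
    intro h
    have h0 : ∫⁻ x, ν.rnDeriv π x ∂ν = 0 := by rw [hZeq, h]
    rw [lintegral_eq_zero_iff (Measure.measurable_rnDeriv ν π)] at h0
    haveI : (ae ν).NeBot := ae_neBot.mpr (IsProbabilityMeasure.ne_zero ν)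
    obtain ⟨x, hx1, hx2⟩ := ((Measure.rnDeriv_pos hνπ).and h0).exists
    simp [hx2] at hx1
  by_cases hint : Integrable (fun x => Real.log (μ.rnDeriv ν x).toReal) μ
  swap
  · have h1 : klDiv μ ν = ⊤ := by
      rw [klDiv, if_neg]
      exact fun h => hint h.2
    rw [h1, EReal.mul_top_of_pos (by norm_num), EReal.top_add_of_ne_bot (by simp [hZ0])]
    exact le_top
  by_cases hZtop : Z = ⊤
  · have hb : (2 : EReal) * klDiv μ ν ≠ ⊥ := by
      rw [klDiv]
      split_ifs with h
      · rw [show (2 : EReal) = ((2 : ℝ) : EReal) by norm_cast, ← EReal.coe_mul]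
        exact EReal.coe_ne_bot _
      · rw [EReal.mul_top_of_pos (by norm_num)]; exact (by simp)
    rw [hZtop, ENNReal.log_top, EReal.add_top_of_ne_bot hb]
    exact le_top
  -- main case
  have hZR : 0 < Z.toReal := ENNReal.toReal_pos hZ0 hZtop
  set R : ℝ := Z.toReal with hRdef
  -- a.e. facts
  have hd_pos : ∀ᵐ x ∂μ, 0 < μ.rnDeriv ν x := Measure.rnDeriv_pos hμν
  have hd_fin : ∀ᵐ x ∂μ, μ.rnDeriv ν x < ⊤ := hμν.ae_le (Measure.rnDeriv_lt_top μ ν)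
  have hg_pos : ∀ᵐ x ∂μ, 0 < ν.rnDeriv π x := hμν.ae_le (Measure.rnDeriv_pos hνπ)
  have hg_fin : ∀ᵐ x ∂μ, ν.rnDeriv π x < ⊤ := hμπ.ae_le (Measure.rnDeriv_lt_top ν π)
  have hD_pos : ∀ᵐ x ∂μ, 0 < μ.rnDeriv π x := Measure.rnDeriv_pos hμπ
  have hD_fin : ∀ᵐ x ∂μ, μ.rnDeriv π x < ⊤ := hμπ.ae_le (Measure.rnDeriv_lt_top μ π)
  have hmul : ∀ᵐ x ∂μ, μ.rnDeriv ν x * ν.rnDeriv π x = μ.rnDeriv π x :=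
    hμπ.ae_le (Measure.rnDeriv_mul_rnDeriv hμν)
  -- the ratio e = g / d
  set e : Ω → ℝ≥0∞ := fun x => ν.rnDeriv π x / μ.rnDeriv ν x with hedef
  have he_meas : Measurable e := (Measure.measurable_rnDeriv ν π).div (Measure.measurable_rnDeriv μ ν)
  have he_lint : ∫⁻ x, e x ∂μ ≤ Z := by
    rw [← lintegral_rnDeriv_mul hμν he_meas.aemeasurable]
    calc ∫⁻ x, μ.rnDeriv ν x * e x ∂ν ≤ ∫⁻ x, ν.rnDeriv π x ∂ν :=
          lintegral_mono fun x => ENNReal.mul_div_le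
      _ = Z := hZeq
  have he_fin : ∀ᵐ x ∂μ, e x < ⊤ := by
    filter_upwards [hg_fin, hd_pos] with x h1 h2
    exact ENNReal.div_lt_top h1.ne h2.ne'
  have heF : Integrable (fun x => (e x).toReal) μ :=
    integrable_toReal_of_lintegral_ne_top he_meas.aemeasurable
      (lt_of_le_of_lt he_lint (lt_top_iff_ne_top.mpr hZtop)).ne
  have he_int_le : ∫ x, (e x).toReal ∂μ ≤ R := by
    rw [integral_toReal he_meas.aemeasurable he_fin]
    exact ENNReal.toReal_mono hZtop he_lint
  -- the upper bound function F
  set F : Ω → ℝ := fun x =>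
    2 * Real.log (μ.rnDeriv ν x).toReal + (e x).toReal / R + (Real.log R - 1) with hFdef
  have hF_int : Integrable F μ := ((hint.const_mul 2).add (heF.div_const R)).add (integrable_const _)
  -- pointwise upper bound
  have hub : ∀ᵐ x ∂μ, Real.log (μ.rnDeriv π x).toReal ≤ F x := by
    filter_upwards [hd_pos, hd_fin, hg_pos, hg_fin, hmul] with x h1 h2 h3 h4 h5
    have ha : 0 < (μ.rnDeriv ν x).toReal := ENNReal.toReal_pos h1.ne' h2.ne
    have hb : 0 < (ν.rnDeriv π x).toReal := ENNReal.toReal_pos h3.ne' h4.ne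
    have hD : (μ.rnDeriv π x).toReal = (μ.rnDeriv ν x).toReal * (ν.rnDeriv π x).toReal := by
      rw [← h5, ENNReal.toReal_mul]
    have hetoReal : (e x).toReal = (ν.rnDeriv π x).toReal / (μ.rnDeriv ν x).toReal := by
      rw [hedef]; exact ENNReal.toReal_div _ _
    set a := (μ.rnDeriv ν x).toReal
    set b := (ν.rnDeriv π x).toReal
    have key : Real.log (b / a / R) ≤ b / a / R - 1 :=
      Real.log_le_sub_one_of_pos (by positivity)
    have hlog1 : Real.log (b / a / R) = Real.log b - Real.log a - Real.log R := by
      rw [Real.log_div (by positivity) (by positivity), Real.log_div hb.ne' ha.ne']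
    rw [hD, Real.log_mul ha.ne' hb.ne', hFdef]
    simp only [hetoReal]
    have := key
    rw [hlog1] at this
    linarith
  -- pointwise lower bound via the inverse
  set G : Ω → ℝ := fun x => ((μ.rnDeriv π x)⁻¹).toReal with hGdef
  have hG_meas : Measurable (fun x => (μ.rnDeriv π x)⁻¹) := (Measure.measurable_rnDeriv μ π).inv
  have hG_lint : ∫⁻ x, (μ.rnDeriv π x)⁻¹ ∂μ ≤ 1 := by
    rw [← lintegral_rnDeriv_mul hμπ hG_meas.aemeasurable]
    calc ∫⁻ x, μ.rnDeriv π x * (μ.rnDeriv π x)⁻¹ ∂π ≤ ∫⁻ _, 1 ∂π :=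
          lintegral_mono fun x => ENNReal.mul_inv_le_one _
      _ = 1 := by simp
  have hG_int : Integrable G μ :=
    integrable_toReal_of_lintegral_ne_top hG_meas.aemeasurable
      (lt_of_le_of_lt hG_lint ENNReal.one_lt_top).ne
  have hlb : ∀ᵐ x ∂μ, -Real.log (μ.rnDeriv π x).toReal ≤ G x := by
    filter_upwards [hD_pos, hD_fin] with x h1 h2
    have hD : 0 < (μ.rnDeriv π x).toReal := ENNReal.toReal_pos h1.ne' h2.ne
    have : Real.log ((μ.rnDeriv π x).toReal)⁻¹ ≤ ((μ.rnDeriv π x).toReal)⁻¹ - 1 :=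
      Real.log_le_sub_one_of_pos (by positivity)
    rw [Real.log_inv] at this
    have hGx : G x = ((μ.rnDeriv π x).toReal)⁻¹ := by
      rw [hGdef]; exact ENNReal.toReal_inv _
    rw [hGx]
    linarith
  -- integrability of the log-likelihood ratio w.r.t. π
  have hlogD_meas : AEStronglyMeasurable (fun x => Real.log (μ.rnDeriv π x).toReal) μ :=
    ((Measure.measurable_rnDeriv μ π).ennreal_toReal.log).aestronglyMeasurable
  have hlogD_int : Integrable (fun x => Real.log (μ.rnDeriv π x).toReal) μ := by
    refine Integrable.mono' (hF_int.sup hG_int) hlogD_meas ?_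
    filter_upwards [hub, hlb] with x h1 h2
    rw [Real.norm_eq_abs, abs_le]
    constructor
    · have := le_sup_right (a := F x) (b := G x)
      simp only [Pi.sup_apply] at *
      linarith
    · have := le_sup_left (a := F x) (b := G x)
      simp only [Pi.sup_apply] at *
      linarith
  -- the integral inequality
  have hFint_eq : ∫ x, F x ∂μ =
      2 * ∫ x, Real.log (μ.rnDeriv ν x).toReal ∂μ + (∫ x, (e x).toReal ∂μ) / R +
        (Real.log R - 1) := by
    have hadd1 : Integrable (fun x => 2 * Real.log (μ.rnDeriv ν x).toReal +
        (e x).toReal / R) μ := (hint.const_mul 2).add (heF.div_const R)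
    simp only [hFdef]
    rw [integral_add hadd1 (integrable_const _),
      integral_add (hint.const_mul 2) (heF.div_const R), integral_const,
      integral_const_mul, integral_div]
    simp [measure_univ]
  have hmain : ∫ x, Real.log (μ.rnDeriv π x).toReal ∂μ ≤
      2 * ∫ x, Real.log (μ.rnDeriv ν x).toReal ∂μ + Real.log R := by
    have h1 : ∫ x, Real.log (μ.rnDeriv π x).toReal ∂μ ≤ ∫ x, F x ∂μ :=
      integral_mono_ae hlogD_int hF_int hub
    have h2 : (∫ x, (e x).toReal ∂μ) / R ≤ 1 := by
      rw [div_le_one hZR]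
      exact he_int_le
    rw [hFint_eq] at h1
    linarith
  -- conclude
  have hklπ : klDiv μ π = ((∫ x, Real.log (μ.rnDeriv π x).toReal ∂μ : ℝ) : EReal) := by
    rw [klDiv, if_pos ⟨hμπ, hlogD_int⟩]
  have hklν : klDiv μ ν = ((∫ x, Real.log (μ.rnDeriv ν x).toReal ∂μ : ℝ) : EReal) := by
    rw [klDiv, if_pos ⟨hμν, hint⟩]
  have hlogZ : ENNReal.log Z = ((Real.log R : ℝ) : EReal) :=
    ENNReal.log_pos_real' hZR
  rw [hklπ, hklν, hlogZ, show (2 : EReal) = ((2 : ℝ) : EReal) by norm_cast,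
    ← EReal.coe_mul, ← EReal.coe_add]
  exact EReal.coe_le_coe_iff.mpr hmain
end

section
/- (Rényi change of measure for tail probabilities.) Let μ, π be probability measures on a measurable space Ω, let φ: Ω → ℝ be measurable, and suppose π{φ ≥ h} ≤ ψ(h) for some h ∈ ℝ and some bound ψ(h) ≥ 0. Then for any q > 1, μ{φ ≥ h} ≤ ψ(h)^{(q-1)/q} · exp(((q-1)/q) R_q(μ ‖ π)). -/
open MeasureTheory
open scoped Classical ENNReal

/-- Rényi change of measure for tail probabilities: if `π{φ ≥ h} ≤ ψ(h)` and
`R_q(μ ‖ π)` is finite, then `μ{φ ≥ h} ≤ ψ(h)^{(q-1)/q} exp(((q-1)/q) R_q(μ ‖ π))`. -/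
theorem renyi_change_of_measure {Ω : Type*} [MeasurableSpace Ω]
    (μ π : Measure Ω) [IsProbabilityMeasure μ] [IsProbabilityMeasure π]
    (q : ℝ) (hq : 1 < q)
    (φ : Ω → ℝ) (hφ : Measurable φ) (h ψh : ℝ) (hψ : 0 ≤ ψh)
    (htail : (π {x | h ≤ φ x}).toReal ≤ ψh)
    (Rq : ℝ) (hRq : renyiDiv q μ π = (Rq : EReal)) :
    (μ {x | h ≤ φ x}).toReal
      ≤ ψh ^ ((q - 1) / q) * Real.exp (((q - 1) / q) * Rq) := by
  have hq0 : 0 < q := lt_trans one_pos hq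
  have hq1 : 0 < q - 1 := sub_pos.2 hq
  set A : Set Ω := {x | h ≤ φ x} with hA
  have hAm : MeasurableSet A := hφ measurableSet_Ici
  -- absolute continuity
  have hac : μ ≪ π := by
    by_contra hnac
    rw [renyiDiv, if_neg hnac] at hRq
    exact (EReal.coe_ne_top Rq) hRq.symm
  rw [renyiDiv, if_pos hac] at hRq
  set I : ℝ≥0∞ := ∫⁻ x, μ.rnDeriv π x ^ q ∂π with hI
  have hIne0 : I ≠ 0 := by
    intro h0
    rw [h0, ENNReal.log_zero] at hRq
    rw [EReal.coe_mul_bot_of_pos (by positivity : (0:ℝ) < (q-1)⁻¹)] at hRq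
    exact (EReal.bot_ne_coe Rq) hRq
  have hIneTop : I ≠ ⊤ := by
    intro h0
    rw [h0, ENNReal.log_top] at hRq
    rw [EReal.coe_mul_top_of_pos (by positivity : (0:ℝ) < (q-1)⁻¹)] at hRq
    exact (EReal.top_ne_coe Rq) hRq
  have hlog : ENNReal.log I = Real.log I.toReal := ENNReal.log_pos_real hIne0 hIneTop
  rw [hlog, ← EReal.coe_mul, EReal.coe_eq_coe_iff] at hRq
  have hIpos : 0 < I.toReal := ENNReal.toReal_pos hIne0 hIneTop
  have hItoReal : I.toReal = Real.exp ((q - 1) * Rq) := by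
    have : Real.log I.toReal = (q - 1) * Rq := by
      field_simp at hRq
      rw [hRq]
    rw [← this, Real.exp_log hIpos]
  -- Hölder
  set q' : ℝ := q / (q - 1) with hq'
  have hpq : q.HolderConjugate q' := Real.HolderConjugate.conjExponent hq
  have hg : Measurable (A.indicator (fun _ => (1:ℝ≥0∞))) := measurable_one.indicator hAm
  have holder := ENNReal.lintegral_mul_le_Lp_mul_Lq π hpq
    (μ.measurable_rnDeriv π).aemeasurable hg.aemeasurable
  have hmulA : ∫⁻ x, (μ.rnDeriv π * A.indicator (fun _ => (1:ℝ≥0∞))) x ∂π = μ A := by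
    rw [← Measure.setLIntegral_rnDeriv hac A]
    rw [← lintegral_indicator hAm]
    congr 1
    ext x
    by_cases hx : x ∈ A <;> simp [hx]
  have hind : ∫⁻ x, (A.indicator (fun _ => (1:ℝ≥0∞))) x ^ q' ∂π = π A := by
    rw [← lintegral_indicator_one hAm]
    congr 1
    ext x
    by_cases hx : x ∈ A <;> simp [hx, ENNReal.zero_rpow_of_pos hpq.symm.pos]
  rw [hmulA, hind] at holder
  -- pass to toReal
  have hμAne : μ A ≠ ⊤ := measure_ne_top μ A
  have hπAne : π A ≠ ⊤ := measure_ne_top π A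
  have hrhs_ne : I ^ (1/q) * (π A) ^ (1/q') ≠ ⊤ := by
    apply ENNReal.mul_ne_top
    · exact ENNReal.rpow_ne_top_of_nonneg (by positivity) hIneTop
    · exact ENNReal.rpow_ne_top_of_nonneg (by positivity) hπAne
  have := ENNReal.toReal_mono hrhs_ne holder
  rw [ENNReal.toReal_mul, ← ENNReal.toReal_rpow, ← ENNReal.toReal_rpow] at this
  refine le_trans this ?_
  have h1 : I.toReal ^ (1/q) = Real.exp (((q-1)/q) * Rq) := by
    rw [hItoReal, ← Real.exp_mul]
    ring_nf
  have h2 : (π A).toReal ^ (1/q') ≤ ψh ^ ((q-1)/q) := by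
    have : 1/q' = (q-1)/q := by
      rw [hq']; field_simp
    rw [this]
    exact Real.rpow_le_rpow ENNReal.toReal_nonneg htail (by positivity)
  calc I.toReal ^ (1/q) * (π A).toReal ^ (1/q')
      ≤ I.toReal ^ (1/q) * (ψh ^ ((q-1)/q)) := by
        apply mul_le_mul_of_nonneg_left h2 (by positivity)
    _ = ψh ^ ((q-1)/q) * Real.exp (((q-1)/q) * Rq) := by rw [h1]; ring
end

section
/- (Sub-Gaussianity of the score.) Let π ∝ exp(-V) be a probability measure on ℝ^d where V is continuously differentiable and ∇V is β-Lipschitz. Then for every v ∈ ℝ^d, E_π[exp⟨∇V, v⟩] ≤ exp(β‖v‖²/2). -/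
open MeasureTheory
open scoped RealInnerProductSpace ENNReal NNReal

lemma grad_taylor {d : ℕ} (V : EuclideanSpace ℝ (Fin d) → ℝ)
    (β : ℝ) (hβ : 0 ≤ β) (hV : ContDiff ℝ 1 V)
    (hLip : LipschitzWith β.toNNReal (gradient V))
    (x v : EuclideanSpace ℝ (Fin d)) :
    V (x - v) ≤ V x - ⟪gradient V x, v⟫ + β * ‖v‖ ^ 2 / 2 := by
  have hdiff : ∀ y, DifferentiableAt ℝ V y := fun y => (hV.differentiable one_ne_zero) y
  have hgc : Continuous (gradient V) := hLip.continuous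
  set g : ℝ → ℝ := fun t => V (x - t • v) with hg
  have hderiv : ∀ t : ℝ, HasDerivAt g ⟪gradient V (x - t • v), -v⟫ t := by
    intro t
    have h1 : HasDerivAt (fun t : ℝ => x - t • v) (-v) t := by
      simpa using ((hasDerivAt_id t).smul_const v).const_sub x
    have h2 : HasFDerivAt V (InnerProductSpace.toDual ℝ _ (gradient V (x - t • v))) (x - t • v) :=
      (hdiff _).hasGradientAt.hasFDerivAt
    have := h2.comp_hasDerivAt t h1
    have this' : HasDerivAt g (InnerProductSpace.toDual ℝ _ (gradient V (x - t • v)) (-v)) t := this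
    simpa [inner_neg_right] using this'
  have hcont : Continuous fun t : ℝ => ⟪gradient V (x - t • v), -v⟫ := by
    exact (hgc.comp (continuous_const.sub (continuous_id.smul continuous_const))).inner continuous_const
  have hFTC : g 1 - g 0 = ∫ t in (0:ℝ)..1, ⟪gradient V (x - t • v), -v⟫ :=
    (intervalIntegral.integral_eq_sub_of_hasDerivAt (fun t _ => hderiv t)
      (hcont.intervalIntegrable 0 1)).symm
  have hbound : ∀ t ∈ Set.Icc (0:ℝ) 1,
      ⟪gradient V (x - t • v), -v⟫ ≤ ⟪gradient V x, -v⟫ + β * t * ‖v‖ ^ 2 := by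
    intro t ht
    have h1 : ⟪gradient V (x - t • v) - gradient V x, -v⟫
        ≤ ‖gradient V (x - t • v) - gradient V x‖ * ‖v‖ := by
      calc ⟪gradient V (x - t • v) - gradient V x, -v⟫
          ≤ ‖gradient V (x - t • v) - gradient V x‖ * ‖-v‖ := real_inner_le_norm _ _
        _ = _ := by rw [norm_neg]
    have h2 : ‖gradient V (x - t • v) - gradient V x‖ ≤ β * (t * ‖v‖) := by
      have := hLip.dist_le_mul (x - t • v) x
      rw [dist_eq_norm] at this
      calc ‖gradient V (x - t • v) - gradient V x‖
          ≤ β.toNNReal * ‖x - t • v - x‖ := by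
            simpa [dist_eq_norm] using this
        _ = β * (t * ‖v‖) := by
            rw [Real.coe_toNNReal β hβ]
            congr 1
            rw [sub_sub_cancel_left, norm_neg, norm_smul, Real.norm_eq_abs,
              abs_of_nonneg ht.1]
    have h3 : ⟪gradient V (x - t • v) - gradient V x, -v⟫ ≤ β * t * ‖v‖ ^ 2 := by
      refine h1.trans ?_
      calc ‖gradient V (x - t • v) - gradient V x‖ * ‖v‖
          ≤ (β * (t * ‖v‖)) * ‖v‖ := by
            exact mul_le_mul_of_nonneg_right h2 (norm_nonneg v)
        _ = β * t * ‖v‖ ^ 2 := by ring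
    have := inner_sub_left (𝕜 := ℝ) (gradient V (x - t • v)) (gradient V x) (-v)
    linarith [this ▸ h3]
  have hint : IntervalIntegrable (fun t : ℝ => ⟪gradient V x, -v⟫ + β * t * ‖v‖ ^ 2) volume 0 1 :=
    Continuous.intervalIntegrable (by fun_prop) 0 1
  have hint2 : IntervalIntegrable (fun t : ℝ => β * t * ‖v‖ ^ 2) volume 0 1 :=
    Continuous.intervalIntegrable (by fun_prop) 0 1
  have hile : ∫ t in (0:ℝ)..1, ⟪gradient V (x - t • v), -v⟫
      ≤ ∫ t in (0:ℝ)..1, (⟪gradient V x, -v⟫ + β * t * ‖v‖ ^ 2) := by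
    apply intervalIntegral.integral_mono_on (by norm_num)
      (hcont.intervalIntegrable 0 1)
      hint
    exact hbound
  have hval : ∫ t in (0:ℝ)..1, (⟪gradient V x, -v⟫ + β * t * ‖v‖ ^ 2)
      = ⟪gradient V x, -v⟫ + β * ‖v‖ ^ 2 / 2 := by
    rw [intervalIntegral.integral_add (intervalIntegrable_const) hint2]
    simp only [intervalIntegral.integral_const, smul_eq_mul]
    have : ∫ t in (0:ℝ)..1, β * t * ‖v‖ ^ 2 = β * ‖v‖ ^ 2 / 2 := by
      have : (fun t : ℝ => β * t * ‖v‖ ^ 2) = fun t : ℝ => (β * ‖v‖ ^ 2) * t := by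
        funext t; ring
      rw [this, intervalIntegral.integral_const_mul, integral_id]
      ring
    rw [this]; ring
  have hinner : ⟪gradient V x, -v⟫ = -⟪gradient V x, v⟫ := inner_neg_right _ _
  have : g 1 - g 0 ≤ ⟪gradient V x, -v⟫ + β * ‖v‖ ^ 2 / 2 := by
    rw [hFTC]; rw [← hval]; exact hile
  simp only [hg, one_smul, zero_smul, sub_zero] at this
  linarith [this, hinner ▸ this]

/-- Sub-Gaussianity of the score: if `π ∝ exp(-V)` on `ℝ^d` with `∇V` `β`-Lipschitz, then
for every `v`, `E_π[exp ⟪∇V, v⟫] ≤ exp (β ‖v‖² / 2)`. -/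
theorem score_subgaussian (d : ℕ) (V : EuclideanSpace ℝ (Fin d) → ℝ)
    (β : ℝ) (hβ : 0 ≤ β) (hV : ContDiff ℝ 1 V)
    (hLip : LipschitzWith β.toNNReal (gradient V))
    (π : Measure (EuclideanSpace ℝ (Fin d))) [IsProbabilityMeasure π]
    (c : ℝ≥0∞) (hc0 : c ≠ 0) (hctop : c ≠ ⊤)
    (hπ : π = c • (volume.withDensity fun x => ENNReal.ofReal (Real.exp (-V x)))) :
    ∀ v : EuclideanSpace ℝ (Fin d),
      ∫ x, Real.exp ⟪gradient V x, v⟫ ∂π ≤ Real.exp (β * ‖v‖ ^ 2 / 2) := by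
  intro v
  set K : ℝ := β * ‖v‖ ^ 2 / 2 with hK
  have hgc : Continuous (gradient V) := hLip.continuous
  have hVc : Continuous V := hV.continuous
  have hfc : Continuous fun x => Real.exp ⟪gradient V x, v⟫ :=
    Real.continuous_exp.comp (hgc.inner continuous_const)
  have hgm : Measurable fun x => ENNReal.ofReal (Real.exp (-V x)) :=
    (ENNReal.measurable_ofReal.comp (Real.measurable_exp.comp hVc.measurable.neg))
  have hfm : Measurable fun x => ENNReal.ofReal (Real.exp ⟪gradient V x, v⟫) :=
    ENNReal.measurable_ofReal.comp hfc.measurable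
  -- express the Bochner integral via lintegral
  have h1 : ∫ x, Real.exp ⟪gradient V x, v⟫ ∂π
      = (∫⁻ x, ENNReal.ofReal (Real.exp ⟪gradient V x, v⟫) ∂π).toReal :=
    integral_eq_lintegral_of_nonneg_ae (ae_of_all _ fun x => (Real.exp_pos _).le)
      hfc.aestronglyMeasurable
  -- normalization : c * ∫⁻ e^{-V} = 1
  have hnorm : c * ∫⁻ x, ENNReal.ofReal (Real.exp (-V x)) = 1 := by
    have := measure_univ (μ := π)
    rw [hπ] at this
    simpa [Measure.smul_apply, withDensity_apply _ MeasurableSet.univ, smul_eq_mul,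
      setLIntegral_univ] using this
  -- the lintegral bound
  have htrans : ∫⁻ x, ENNReal.ofReal (Real.exp (-V (x - v)))
      = ∫⁻ x, ENNReal.ofReal (Real.exp (-V x)) := by
    simp_rw [sub_eq_add_neg]
    exact lintegral_add_right_eq_self (fun x => ENNReal.ofReal (Real.exp (-V x))) (-v)
  have hgm' : Measurable fun x : EuclideanSpace ℝ (Fin d) =>
      ENNReal.ofReal (Real.exp (-V (x - v))) :=
    hgm.comp (measurable_id.sub measurable_const)
  have h2 : ∫⁻ x, ENNReal.ofReal (Real.exp ⟪gradient V x, v⟫) ∂π ≤ ENNReal.ofReal (Real.exp K) := by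
    rw [hπ, lintegral_smul_measure, lintegral_withDensity_eq_lintegral_mul volume hgm hfm]
    have hpt : ∀ x, ((fun x => ENNReal.ofReal (Real.exp (-V x))) *
          fun x => ENNReal.ofReal (Real.exp ⟪gradient V x, v⟫)) x
        ≤ ENNReal.ofReal (Real.exp K) * ENNReal.ofReal (Real.exp (-V (x - v))) := by
      intro x
      simp only [Pi.mul_apply]
      rw [← ENNReal.ofReal_mul (Real.exp_nonneg _), ← ENNReal.ofReal_mul (Real.exp_nonneg _),
        ← Real.exp_add, ← Real.exp_add]
      refine ENNReal.ofReal_le_ofReal (Real.exp_le_exp.mpr ?_)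
      have := grad_taylor V β hβ hV hLip x v
      simp only [hK]
      linarith
    calc c * ∫⁻ x, ((fun x => ENNReal.ofReal (Real.exp (-V x))) *
          fun x => ENNReal.ofReal (Real.exp ⟪gradient V x, v⟫)) x
        ≤ c * ∫⁻ x, ENNReal.ofReal (Real.exp K) * ENNReal.ofReal (Real.exp (-V (x - v))) :=
          mul_le_mul_right (lintegral_mono hpt) c
      _ = c * (ENNReal.ofReal (Real.exp K) * ∫⁻ x, ENNReal.ofReal (Real.exp (-V (x - v)))) := by
          rw [lintegral_const_mul _ hgm']
      _ = ENNReal.ofReal (Real.exp K) * (c * ∫⁻ x, ENNReal.ofReal (Real.exp (-V x))) := by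
          rw [htrans]; ring
      _ = ENNReal.ofReal (Real.exp K) := by rw [hnorm, mul_one]
  rw [h1]
  exact ENNReal.toReal_le_of_le_ofReal (Real.exp_nonneg _) h2
end

section
/- (Sub-Weibull change of measure along a divergence-nonincreasing flow.) Let π, μ₀ be probability measures with R_q(μ₀ ‖ π) ≤ K·d^{1/2} for some q ≥ 2 and K > 0, and let μ be any probability measure with R_q(μ ‖ π) ≤ R_q(μ₀ ‖ π). Suppose f is a measurable function such that for all δ ∈ (0, 1/c₀), π{f > C₁ d + C₂ d^{1/2} log(1/δ) + C₃ log²(1/δ)} ≤ δ. Then there is a constant C' (depending only on K, c₀) such that for all δ ∈ (0, 1/c₀'), μ{f > C' max{C₁, C₂, C₃} d + C' C₂ d^{1/2} log(1/δ) + C' C₃ log²(1/δ)} ≤ δ. -/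
open MeasureTheory
open scoped Classical

set_option maxHeartbeats 1000000 in
/-- Sub-Weibull change of measure along a divergence-nonincreasing flow: if
`R_q(μ₀ ‖ π) ≤ K √d`, `R_q(μ ‖ π) ≤ R_q(μ₀ ‖ π)`, and under `π` the function `f`
satisfies a sub-Weibull tail bound, then `f` satisfies a comparable tail bound under `μ`
with constants depending only on `K` and `c₀`. -/
theorem subweibull_change_of_measure :
    ∀ K c₀ : ℝ, 0 < K → 0 < c₀ →
      ∃ C' : ℝ, 0 < C' ∧ ∃ c₀' : ℝ, 0 < c₀' ∧
        ∀ (Ω : Type) [MeasurableSpace Ω] (π μ₀ μ : Measure Ω),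
          IsProbabilityMeasure π → IsProbabilityMeasure μ₀ → IsProbabilityMeasure μ →
        ∀ q : ℝ, 2 ≤ q →
        ∀ d C₁ C₂ C₃ : ℝ, 1 ≤ d → 0 ≤ C₁ → 0 ≤ C₂ → 0 ≤ C₃ →
        ∀ f : Ω → ℝ, Measurable f →
          renyiDiv q μ₀ π ≤ ((K * Real.sqrt d : ℝ) : EReal) →
          renyiDiv q μ π ≤ renyiDiv q μ₀ π →
          (∀ δ : ℝ, 0 < δ → δ < 1 / c₀ →
            π {x | C₁ * d + C₂ * Real.sqrt d * Real.log (1 / δ)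
                + C₃ * Real.log (1 / δ) ^ 2 < f x} ≤ ENNReal.ofReal δ) →
          ∀ δ : ℝ, 0 < δ → δ < 1 / c₀' →
            μ {x | C' * max C₁ (max C₂ C₃) * d
                + C' * C₂ * Real.sqrt d * Real.log (1 / δ)
                + C' * C₃ * Real.log (1 / δ) ^ 2 < f x} ≤ ENNReal.ofReal δ := by
  intro K c₀ hK hc₀
  refine ⟨8 + K + 2 * K ^ 2, by positivity, max c₀ 2, by positivity, ?_⟩
  intro Ω _ π μ₀ μ hπp hμ₀p hμp q hq d C₁ C₂ C₃ hd hC₁ hC₂ hC₃ f hf h₀ hμle hπtail δ hδ hδlt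
  have hq1 : (0:ℝ) < q - 1 := by linarith
  have hq0 : (0:ℝ) < q := by linarith
  have hμle' : renyiDiv q μ π ≤ ((K * Real.sqrt d : ℝ) : EReal) := le_trans hμle h₀
  have hsd : (1:ℝ) ≤ Real.sqrt d := by
    rw [show (1:ℝ) = Real.sqrt 1 by simp]
    exact Real.sqrt_le_sqrt hd
  have hsd0 : (0:ℝ) ≤ Real.sqrt d := by linarith
  have hsdsq : Real.sqrt d * Real.sqrt d = d := Real.mul_self_sqrt (by linarith)
  -- absolute continuity
  have hac : μ ≪ π := by
    by_contra hac
    rw [renyiDiv, if_neg hac] at hμle'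
    exact EReal.coe_ne_top _ (top_le_iff.mp hμle')
  set I := ∫⁻ x, μ.rnDeriv π x ^ q ∂π with hIdef
  have hle : (((q - 1)⁻¹ : ℝ) : EReal) * ENNReal.log I ≤ ((K * Real.sqrt d : ℝ) : EReal) := by
    rw [renyiDiv, if_pos hac] at hμle'
    exact hμle'
  have hlog : ENNReal.log I ≤ (((q - 1) * (K * Real.sqrt d) : ℝ) : EReal) := by
    have hcpos : (0:EReal) < (((q - 1)⁻¹ : ℝ) : EReal) := by
      exact_mod_cast inv_pos.mpr hq1
    have h2 : ENNReal.log I ≤ ((K * Real.sqrt d : ℝ) : EReal) / (((q - 1)⁻¹ : ℝ) : EReal) := by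
      rw [EReal.le_div_iff_mul_le hcpos (EReal.coe_ne_top _), mul_comm]
      exact hle
    have h3 : ((K * Real.sqrt d : ℝ) : EReal) / (((q - 1)⁻¹ : ℝ) : EReal)
        = (((q - 1) * (K * Real.sqrt d) : ℝ) : EReal) := by
      rw [div_eq_mul_inv, ← EReal.coe_inv, ← EReal.coe_mul, inv_inv]
      congr 1
      ring
    rwa [h3] at h2
  have hI : I ≤ ENNReal.ofReal (Real.exp ((q - 1) * (K * Real.sqrt d))) := by
    rw [← ENNReal.log_le_log_iff, ENNReal.log_ofReal_of_pos (Real.exp_pos _), Real.log_exp]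
    exact hlog
  -- the auxiliary δ for π
  set r : ℝ := (q - 1) / q with hrdef
  have hrpos : 0 < r := div_pos hq1 hq0
  have hrinv : 1 / r = q / (q - 1) := by rw [hrdef, one_div_div]
  have hrinv1 : 1 ≤ 1 / r := by
    rw [hrinv, le_div_iff₀ hq1]; linarith
  have hrinv2 : 1 / r ≤ 2 := by
    rw [hrinv, div_le_iff₀ hq1]; linarith
  set L : ℝ := Real.log (1 / δ) with hLdef
  have hδ2 : δ < 1 / 2 := lt_of_lt_of_le hδlt
    (one_div_le_one_div_of_le two_pos (le_max_right _ _))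
  have hδ1 : δ ≤ 1 := by linarith
  have hL0 : 0 ≤ L := Real.log_nonneg (by rw [le_div_iff₀ hδ]; linarith)
  set δπ : ℝ := Real.exp (-((1 / r) * L + K * Real.sqrt d)) with hδπdef
  have hδπpos : 0 < δπ := Real.exp_pos _
  have hδeq : δ = Real.exp (-L) := by
    rw [hLdef, Real.log_div one_ne_zero (ne_of_gt hδ), Real.log_one]
    simp [Real.exp_log hδ]
  have hδπle : δπ ≤ δ := by
    rw [hδeq, hδπdef]
    apply Real.exp_le_exp.mpr
    have : L ≤ (1 / r) * L := le_mul_of_one_le_left hL0 hrinv1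
    nlinarith [mul_pos hK (lt_of_lt_of_le one_pos hsd)]
  have hδπlt : δπ < 1 / c₀ := lt_of_le_of_lt hδπle (lt_of_lt_of_le hδlt
    (one_div_le_one_div_of_le hc₀ (le_max_left _ _)))
  have hπA := hπtail δπ hδπpos hδπlt
  have hLπ : Real.log (1 / δπ) = (1 / r) * L + K * Real.sqrt d := by
    rw [one_div, hδπdef, ← Real.exp_neg, neg_neg, Real.log_exp]
  -- threshold comparison
  have hd0' : (0:ℝ) ≤ d := by linarith
  set C' : ℝ := 8 + K + 2 * K ^ 2 with hC'def
  set M : ℝ := max C₁ (max C₂ C₃) with hMdef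
  have hMC₁ : C₁ ≤ M := le_max_left _ _
  have hMC₂ : C₂ ≤ M := le_trans (le_max_left _ _) (le_max_right _ _)
  have hMC₃ : C₃ ≤ M := le_trans (le_max_right _ _) (le_max_right _ _)
  have hM0 : 0 ≤ M := le_trans hC₁ hMC₁
  have hthresh : C₁ * d + C₂ * Real.sqrt d * Real.log (1 / δπ)
      + C₃ * Real.log (1 / δπ) ^ 2
      ≤ C' * M * d + C' * C₂ * Real.sqrt d * L + C' * C₃ * L ^ 2 := by
    rw [hLπ, hC'def]
    have hKsd : 0 ≤ K * Real.sqrt d := by positivity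
    have hLπle : (1 / r) * L + K * Real.sqrt d ≤ 2 * L + K * Real.sqrt d := by
      have := mul_le_mul_of_nonneg_right hrinv2 hL0
      linarith
    have hLπ0 : 0 ≤ (1 / r) * L + K * Real.sqrt d := by positivity
    have hsq : ((1 / r) * L + K * Real.sqrt d) ^ 2 ≤ (2 * L + K * Real.sqrt d) ^ 2 :=
      pow_le_pow_left₀ hLπ0 hLπle 2
    have hsq2 : (2 * L + K * Real.sqrt d) ^ 2 ≤ 8 * L ^ 2 + 2 * K ^ 2 * d := by
      nlinarith [sq_nonneg (2 * L - K * Real.sqrt d), hsdsq]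
    have h1 : C₂ * Real.sqrt d * ((1 / r) * L + K * Real.sqrt d)
        ≤ C₂ * Real.sqrt d * (2 * L + K * Real.sqrt d) :=
      mul_le_mul_of_nonneg_left hLπle (mul_nonneg hC₂ hsd0)
    have h2 : C₃ * ((1 / r) * L + K * Real.sqrt d) ^ 2
        ≤ C₃ * (8 * L ^ 2 + 2 * K ^ 2 * d) :=
      mul_le_mul_of_nonneg_left (le_trans hsq hsq2) hC₃
    have m1 : C₁ * d ≤ M * d := mul_le_mul_of_nonneg_right hMC₁ hd0'
    have m2 : C₂ * d ≤ M * d := mul_le_mul_of_nonneg_right hMC₂ hd0'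
    have m3 : C₃ * d ≤ M * d := mul_le_mul_of_nonneg_right hMC₃ hd0'
    have k1 : K * (C₂ * d) ≤ K * (M * d) := mul_le_mul_of_nonneg_left m2 hK.le
    have k2 : K ^ 2 * (C₃ * d) ≤ K ^ 2 * (M * d) :=
      mul_le_mul_of_nonneg_left m3 (by positivity)
    have p1 : 0 ≤ C₂ * Real.sqrt d * L := by positivity
    have p2 : 0 ≤ C₃ * L ^ 2 := by positivity
    have p3 : 0 ≤ M * d := mul_nonneg hM0 hd0'
    have p4 : 0 ≤ K * (C₂ * Real.sqrt d * L) := by positivity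
    have p5 : 0 ≤ K ^ 2 * (C₂ * Real.sqrt d * L) := by positivity
    have p6 : 0 ≤ K * (C₃ * L ^ 2) := by positivity
    have p7 : 0 ≤ K ^ 2 * (C₃ * L ^ 2) := by positivity
    have p8 : 0 ≤ K * (M * d) := by positivity
    have p9 : 0 ≤ K ^ 2 * (M * d) := by positivity
    have e1 : C₂ * Real.sqrt d * ((1 / r) * L + K * Real.sqrt d)
        ≤ 2 * (C₂ * Real.sqrt d * L) + K * (C₂ * d) := by
      have h1' : C₂ * Real.sqrt d * (2 * L + K * Real.sqrt d)
          = 2 * (C₂ * Real.sqrt d * L) + K * (C₂ * (Real.sqrt d * Real.sqrt d)) := by ring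
      rw [hsdsq] at h1'
      linarith [h1]
    linarith [e1, h2, m1, k1, k2, p1, p2, p3, p4, p5, p6, p7, p8, p9]
  -- set inclusion
  have hsub : {x | C' * M * d + C' * C₂ * Real.sqrt d * L + C' * C₃ * L ^ 2 < f x}
      ⊆ {x | C₁ * d + C₂ * Real.sqrt d * Real.log (1 / δπ)
          + C₃ * Real.log (1 / δπ) ^ 2 < f x} := by
    intro x hx
    exact lt_of_le_of_lt hthresh hx
  -- Hölder / change of measure for the π-tail set
  set A : Set Ω := {x | C₁ * d + C₂ * Real.sqrt d * Real.log (1 / δπ)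
      + C₃ * Real.log (1 / δπ) ^ 2 < f x} with hAdef
  have hA : MeasurableSet A := measurableSet_lt measurable_const hf
  have hg : Measurable (μ.rnDeriv π) := Measure.measurable_rnDeriv μ π
  have hμA : μ A = ∫⁻ x, (μ.rnDeriv π * A.indicator (1 : Ω → ENNReal)) x ∂π := by
    rw [← Measure.setLIntegral_rnDeriv hac A, ← lintegral_indicator hA]
    congr 1
    ext x
    by_cases hx : x ∈ A <;> simp [hx]
  have hpq : q.HolderConjugate (q / (q - 1)) :=
    Real.HolderConjugate.conjExponent (by linarith)
  have hholder := ENNReal.lintegral_mul_le_Lp_mul_Lq π hpq hg.aemeasurable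
    ((measurable_one.indicator hA).aemeasurable (μ := π))
  have hind : ∫⁻ x, (A.indicator (1 : Ω → ENNReal)) x ^ (q / (q - 1)) ∂π = π A := by
    rw [← lintegral_indicator_one hA]
    congr 1
    ext x
    by_cases hx : x ∈ A
    · simp [hx, ENNReal.one_rpow]
    · simp [hx, ENNReal.zero_rpow_of_pos (div_pos hq0 hq1)]
  rw [hind] at hholder
  have hμA2 : μ A ≤ I ^ (1 / q) * π A ^ (1 / (q / (q - 1))) := by
    rw [hμA]; exact hholder
  have hr' : 1 / (q / (q - 1)) = r := by rw [hrdef]; field_simp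
  rw [hr'] at hμA2
  -- combine
  have hbound : I ^ (1 / q) * π A ^ r ≤ ENNReal.ofReal δ := by
    have h1 : I ^ (1 / q) ≤ (ENNReal.ofReal (Real.exp ((q - 1) * (K * Real.sqrt d)))) ^ (1 / q) :=
      ENNReal.rpow_le_rpow hI (by positivity)
    have h2 : π A ^ r ≤ (ENNReal.ofReal δπ) ^ r :=
      ENNReal.rpow_le_rpow hπA (le_of_lt hrpos)
    calc I ^ (1 / q) * π A ^ r
        ≤ (ENNReal.ofReal (Real.exp ((q - 1) * (K * Real.sqrt d)))) ^ (1 / q)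
          * (ENNReal.ofReal δπ) ^ r := mul_le_mul' h1 h2
      _ = ENNReal.ofReal (Real.exp ((q - 1) * (K * Real.sqrt d)) ^ (1 / q) * δπ ^ r) := by
          rw [ENNReal.ofReal_rpow_of_pos (Real.exp_pos _), ENNReal.ofReal_rpow_of_pos hδπpos,
            ENNReal.ofReal_mul (by positivity)]
      _ = ENNReal.ofReal δ := by
          congr 1
          rw [hδπdef, ← Real.exp_mul, ← Real.exp_mul, ← Real.exp_add, hδeq]
          congr 1
          rw [hrdef]
          field_simp
          ring
  exact le_trans (measure_mono hsub) (le_trans hμA2 hbound)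
end

section
/- (Finite-dimensional Girsanov exponential has unit expectation.) Under the hypotheses of the finite-dimensional anticipating change of measure with T = id + ψ a C¹ bijection of ℝⁿ and det(I + Dψ) never zero, the random variable M(x) := |det(I + Dψ(x))| exp(−⟨ψ(x), x⟩ − ½‖ψ(x)‖²) satisfies ∫ M dγ_n = 1, i.e. M is a probability density with respect to the standard Gaussian measure γ_n. -/
open MeasureTheory ProbabilityTheory

/-- The standard Gaussian measure on `Fin n → ℝ`. -/
noncomputable def gaussPi (n : ℕ) : Measure (Fin n → ℝ) :=
  Measure.pi fun _ => gaussianReal 0 1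

/-- The Jacobian matrix of `ψ : ℝⁿ → ℝⁿ` at `x`. -/
noncomputable def jacobian (n : ℕ) (ψ : (Fin n → ℝ) → (Fin n → ℝ)) (x : Fin n → ℝ) :
    Matrix (Fin n) (Fin n) ℝ :=
  Matrix.of fun i j => fderiv ℝ ψ x (Pi.single j 1) i

open Finset in
/-- Fubini for a product of functions of the coordinates, lower Lebesgue integral version. -/
lemma lintegral_pi_prod_aux {ι : Type*} [Fintype ι] [DecidableEq ι]
    (μ : ι → Measure ℝ) [∀ i, SigmaFinite (μ i)] (f : ι → ℝ → ENNReal)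
    (hf : ∀ i, Measurable (f i)) :
    ∫⁻ x : ι → ℝ, ∏ i, f i (x i) ∂Measure.pi μ = ∏ i, ∫⁻ t, f i t ∂μ i := by
  have hmeas : Measurable fun x : ι → ℝ => ∏ i, f i (x i) :=
    Finset.measurable_prod _ fun i _ => (hf i).comp (measurable_pi_apply i)
  have key : ∀ s : Finset ι, ∀ x : ι → ℝ,
      (∫⋯∫⁻_s, (fun x => ∏ i, f i (x i)) ∂μ) x
        = (∏ i ∈ s, ∫⁻ t, f i t ∂μ i) * ∏ i ∈ sᶜ, f i (x i) := by
    intro s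
    induction s using Finset.induction_on with
    | empty => intro x; simp
    | @insert i s hi ih =>
      intro x
      have hicompl : i ∈ sᶜ := Finset.mem_compl.mpr hi
      rw [lmarginal_insert _ hmeas hi]
      have step : ∀ t : ℝ,
          (∫⋯∫⁻_s, (fun x => ∏ i, f i (x i)) ∂μ) (Function.update x i t)
            = ((∏ j ∈ s, ∫⁻ u, f j u ∂μ j) * ∏ j ∈ sᶜ.erase i, f j (x j)) * f i t := by
        intro t
        rw [ih]
        rw [← Finset.mul_prod_erase _ _ hicompl, Function.update_self]
        have : ∏ j ∈ sᶜ.erase i, f j (Function.update x i t j)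
            = ∏ j ∈ sᶜ.erase i, f j (x j) :=
          Finset.prod_congr rfl fun j hj => by
            rw [Function.update_of_ne (Finset.ne_of_mem_erase hj)]
        rw [this]; ring
      simp_rw [step, mul_comm ((∏ j ∈ s, ∫⁻ u, f j u ∂μ j) * ∏ j ∈ sᶜ.erase i, f j (x j))]
      rw [lintegral_mul_const _ (hf i), Finset.prod_insert hi, Finset.compl_insert]
      ring
  calc ∫⁻ x : ι → ℝ, ∏ i, f i (x i) ∂Measure.pi μ
      = (∫⋯∫⁻_Finset.univ, (fun x => ∏ i, f i (x i)) ∂μ) (fun _ => 0) :=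
        lintegral_eq_lmarginal_univ (μ := μ) (fun _ => 0)
    _ = ∏ i, ∫⁻ t, f i t ∂μ i := by rw [key]; simp

lemma gaussPi_eq_withDensity (n : ℕ) :
    gaussPi n = (volume : Measure (Fin n → ℝ)).withDensity
      fun x => ∏ i, gaussianPDF 0 1 (x i) := by
  unfold gaussPi
  refine (Measure.pi_eq (μ := fun _ : Fin n => gaussianReal 0 1)
    (μ' := (volume : Measure (Fin n → ℝ)).withDensity fun x => ∏ i, gaussianPDF 0 1 (x i))
    fun s hs => ?_)
  rw [withDensity_apply _ (MeasurableSet.univ_pi hs)]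
  calc ∫⁻ x in Set.pi Set.univ s, ∏ i, gaussianPDF 0 1 (x i) ∂volume
      = ∫⁻ x : Fin n → ℝ, ∏ i, (s i).indicator (gaussianPDF 0 1) (x i) ∂volume := by
        rw [← lintegral_indicator (MeasurableSet.univ_pi hs)]
        refine lintegral_congr fun x => ?_
        by_cases hx : x ∈ Set.pi Set.univ s
        · rw [Set.indicator_of_mem hx]
          exact Finset.prod_congr rfl fun i _ =>
            (Set.indicator_of_mem (hx i (Set.mem_univ i)) _).symm
        · rw [Set.indicator_of_notMem hx]
          obtain ⟨i, hxi⟩ : ∃ i, x i ∉ s i := by simpa [Set.mem_pi] using hx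
          exact (Finset.prod_eq_zero (Finset.mem_univ i)
            (Set.indicator_of_notMem hxi _)).symm
    _ = ∏ i, ∫⁻ t, (s i).indicator (gaussianPDF 0 1) t ∂volume := by
        rw [volume_pi]
        exact lintegral_pi_prod_aux _ _ fun i => (measurable_gaussianPDF 0 1).indicator (hs i)
    _ = ∏ i, gaussianReal 0 1 (s i) := by
        refine Finset.prod_congr rfl fun i _ => ?_
        rw [lintegral_indicator (hs i), ← gaussianReal_apply 0 one_ne_zero]

/-- The finite-dimensional Girsanov exponential
`M(x) = |det(I + Dψ(x))| exp(−⟨ψ(x), x⟩ − ½‖ψ(x)‖²)` is a probability density with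
respect to the standard Gaussian when `T = id + ψ` is a `C¹` bijection with everywhere
invertible Jacobian. -/
theorem girsanov_exponential_unit_expectation (n : ℕ)
    (ψ : (Fin n → ℝ) → (Fin n → ℝ)) (hψ : ContDiff ℝ 1 ψ)
    (hbij : Function.Bijective fun x => x + ψ x)
    (hdet : ∀ x, (1 + jacobian n ψ x).det ≠ 0) :
    ∫⁻ x, ENNReal.ofReal
        (|(1 + jacobian n ψ x).det|
          * Real.exp (-(∑ i, ψ x i * x i) - (∑ i, ψ x i ^ 2) / 2)) ∂gaussPi n = 1 := by
  classical
  set T : (Fin n → ℝ) → (Fin n → ℝ) := fun x => x + ψ x with hT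
  set f' : (Fin n → ℝ) → (Fin n → ℝ) →L[ℝ] (Fin n → ℝ) :=
    fun x => ContinuousLinearMap.id ℝ (Fin n → ℝ) + fderiv ℝ ψ x with hf'
  have hdiff : ∀ x, HasFDerivAt T (f' x) x := fun x =>
    (hasFDerivAt_id x).add ((hψ.differentiable one_ne_zero x).hasFDerivAt)
  have hdet_eq : ∀ x, (f' x).det = (1 + jacobian n ψ x).det := by
    intro x
    have : LinearMap.toMatrix' ((f' x : (Fin n → ℝ) →L[ℝ] (Fin n → ℝ)) :
        (Fin n → ℝ) →ₗ[ℝ] (Fin n → ℝ)) = 1 + jacobian n ψ x := by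
      ext i j
      simp only [LinearMap.toMatrix'_apply, ContinuousLinearMap.coe_coe, hf',
        ContinuousLinearMap.add_apply, ContinuousLinearMap.coe_id', id_eq,
        Matrix.add_apply, Matrix.one_apply, jacobian, Matrix.of_apply]
      have : (fun j' => if j' = j then (1:ℝ) else 0) = Pi.single j 1 := by
        ext j'; simp [Pi.single_apply]
      simp [Pi.single_apply, Pi.add_apply]
    rw [ContinuousLinearMap.det, ← LinearMap.det_toMatrix', this]
  set g : (Fin n → ℝ) → ENNReal := fun y => ∏ i, gaussianPDF 0 1 (y i) with hg
  have hgmeas : Measurable g :=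
    Finset.measurable_prod _ fun i _ =>
      (measurable_gaussianPDF 0 1).comp (measurable_pi_apply i)
  -- pointwise identity
  have hpoint : ∀ x, g x * ENNReal.ofReal
      (|(1 + jacobian n ψ x).det|
        * Real.exp (-(∑ i, ψ x i * x i) - (∑ i, ψ x i ^ 2) / 2))
      = ENNReal.ofReal |(f' x).det| * g (T x) := by
    intro x
    have h1 : g x = ENNReal.ofReal (∏ i, gaussianPDFReal 0 1 (x i)) := by
      rw [hg, ENNReal.ofReal_prod_of_nonneg fun i _ => gaussianPDFReal_nonneg 0 1 (x i)]
      rfl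
    have h2 : g (T x) = ENNReal.ofReal (∏ i, gaussianPDFReal 0 1 (x i + ψ x i)) := by
      rw [hg, ENNReal.ofReal_prod_of_nonneg fun i _ => gaussianPDFReal_nonneg 0 1 _]
      rfl
    rw [h1, h2, hdet_eq,
      ← ENNReal.ofReal_mul (Finset.prod_nonneg fun i _ => gaussianPDFReal_nonneg 0 1 (x i)),
      ← ENNReal.ofReal_mul (abs_nonneg _)]
    congr 1
    have hpdf : ∀ t : ℝ, gaussianPDFReal 0 1 t
        = (Real.sqrt (2 * Real.pi))⁻¹ * Real.exp (-(t ^ 2) / 2) := by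
      intro t
      simp [gaussianPDFReal, neg_div]
    simp_rw [hpdf]
    rw [Finset.prod_mul_distrib, Finset.prod_mul_distrib, Finset.prod_const,
      ← Real.exp_sum, ← Real.exp_sum]
    have hsplit : Real.exp (∑ i, -(x i + ψ x i) ^ 2 / 2)
        = Real.exp (∑ i, -x i ^ 2 / 2)
          * Real.exp (-(∑ i, ψ x i * x i) - (∑ i, ψ x i ^ 2) / 2) := by
      rw [← Real.exp_add]
      congr 1
      rw [show (∑ i, -(x i + ψ x i) ^ 2 / 2)
          = ∑ i, (-x i ^ 2 / 2 + (-(ψ x i * x i) - ψ x i ^ 2 / 2)) from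
        Finset.sum_congr rfl fun i _ => by ring]
      rw [Finset.sum_add_distrib, Finset.sum_sub_distrib, ← Finset.sum_neg_distrib,
        Finset.sum_div]
    rw [hsplit]
    ring
  calc ∫⁻ x, ENNReal.ofReal
        (|(1 + jacobian n ψ x).det|
          * Real.exp (-(∑ i, ψ x i * x i) - (∑ i, ψ x i ^ 2) / 2)) ∂gaussPi n
      = ∫⁻ x, g x * ENNReal.ofReal
          (|(1 + jacobian n ψ x).det|
            * Real.exp (-(∑ i, ψ x i * x i) - (∑ i, ψ x i ^ 2) / 2)) ∂volume := by
        have hjac : Continuous fun x => jacobian n ψ x :=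
          continuous_matrix fun i j =>
            (continuous_apply i).comp
              ((hψ.continuous_fderiv one_ne_zero).clm_apply continuous_const)
        have hdetc : Continuous fun x => (1 + jacobian n ψ x).det :=
          (continuous_const.add hjac).matrix_det
        have hexpc : Continuous fun x : Fin n → ℝ =>
            Real.exp (-(∑ i, ψ x i * x i) - (∑ i, ψ x i ^ 2) / 2) := by
          refine Real.continuous_exp.comp (Continuous.sub (Continuous.neg ?_) ?_)
          · exact continuous_finset_sum _ fun i _ =>
              ((continuous_apply i).comp hψ.continuous).mul (continuous_apply i)
          · exact (continuous_finset_sum _ fun i _ =>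
              ((continuous_apply i).comp hψ.continuous).pow 2).div_const 2
        have hMmeas : Measurable fun x : Fin n → ℝ => ENNReal.ofReal
            (|(1 + jacobian n ψ x).det|
              * Real.exp (-(∑ i, ψ x i * x i) - (∑ i, ψ x i ^ 2) / 2)) :=
          ((hdetc.abs.mul hexpc).measurable).ennreal_ofReal
        rw [gaussPi_eq_withDensity, lintegral_withDensity_eq_lintegral_mul _ hgmeas hMmeas]
        simp only [Pi.mul_apply]
    _ = ∫⁻ x, ENNReal.ofReal |(f' x).det| * g (T x) ∂volume := lintegral_congr hpoint
    _ = ∫⁻ x in Set.univ, ENNReal.ofReal |(f' x).det| * g (T x) ∂volume := by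
        rw [Measure.restrict_univ]
    _ = ∫⁻ y in T '' Set.univ, g y ∂volume :=
        (lintegral_image_eq_lintegral_abs_det_fderiv_mul volume MeasurableSet.univ
          (fun x _ => (hdiff x).hasFDerivWithinAt) hbij.injective.injOn g).symm
    _ = ∫⁻ y, g y ∂volume := by
        rw [Set.image_univ, Set.range_eq_univ.mpr hbij.surjective, Measure.restrict_univ]
    _ = 1 := by
        have : (volume : Measure (Fin n → ℝ)).withDensity g Set.univ = 1 := by
          rw [← gaussPi_eq_withDensity]
          simp [gaussPi, Measure.pi_univ]
        rwa [withDensity_apply _ MeasurableSet.univ, Measure.restrict_univ] at this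
end
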